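/- arXiv:1512.02085 — 5 statements merged into one kernel-verified Lean document; each statement's English description precedes it below -/
import Mathlib

section
/- Let K be a linear operator on ℂ^d such that K|i⟩ = c_i |f(i)⟩ for some function f : Fin d → Fin d and coefficients c_i ∈ ℂ (i.e., K is an incoherent Kraus operator in the standard basis). If additionally K† is incoherent (K†|i⟩ = d_i |g(i)⟩ for some g and coefficients d_i), then for every matrix ρ and every i, ⟨i| K ρ K† |i⟩ = ⟨i| K Φ(ρ) K† |i⟩, where Φ(ρ) = ∑_i ⟨i|ρ|i⟩ |i⟩⟨i| is the dephasing map in the standard basis. -/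
open Matrix
/-- Dephasing map in the standard basis: keeps the diagonal of a matrix. -/
noncomputable def deph {d : ℕ} (ρ : Matrix (Fin d) (Fin d) ℂ) : Matrix (Fin d) (Fin d) ℂ :=
  Matrix.diagonal fun i => ρ i i

/-- If `K` is incoherent (each column proportional to a basis vector) and `Kᴴ` is also
incoherent, then diagonal matrix elements of `K ρ Kᴴ` only depend on the diagonal of `ρ`. -/
theorem stmt_0 {d : ℕ} (K : Matrix (Fin d) (Fin d) ℂ)
    (f g : Fin d → Fin d) (c e : Fin d → ℂ)
    (hK : ∀ i j, K j i = if j = f i then c i else 0)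
    (hKd : ∀ i j, Kᴴ j i = if j = g i then e i else 0)
    (ρ : Matrix (Fin d) (Fin d) ℂ) (i : Fin d) :
    (K * ρ * Kᴴ) i i = (K * deph ρ * Kᴴ) i i := by
  have hK' : ∀ a, K i a = if a = g i then star (e i) else 0 := by
    intro a
    have h := hKd i a
    rw [conjTranspose_apply] at h
    have : K i a = star (star (K i a)) := by simp
    rw [this, h]
    split <;> simp
  simp only [Matrix.mul_apply, deph, Matrix.diagonal_apply]
  simp [hK', hKd, Finset.mul_sum, Finset.sum_ite_eq', apply_ite, mul_comm, mul_left_comm]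
end

section
/- Suppose K is a d×d complex matrix such that K is incoherent (K|i⟩ ∝ |f(i)⟩ for some function f) and the map ρ ↦ KρK† commutes with the dephasing map Φ. Then, restricted to indices i where K|i⟩ ≠ 0, the function f is injective; i.e., K can be written as ∑_i c_i |π(i)⟩⟨i| for some permutation π (strictly incoherent form, extending f arbitrarily to a bijection off the support). -/
open Matrix

/-- An injective-on-a-set map of a fintype extends to a permutation. -/
lemma extend_perm {d : ℕ} (f : Fin d → Fin d) (S : Set (Fin d))
    (hinj : Set.InjOn f S) : ∃ π : Equiv.Perm (Fin d), ∀ i ∈ S, π i = f i := by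
  classical
  let e : S ≃ (f '' S : Set (Fin d)) := Equiv.Set.imageOfInjOn f S hinj
  have hcard : Fintype.card (Sᶜ : Set (Fin d)) = Fintype.card ((f '' S : Set (Fin d))ᶜ : Set (Fin d)) := by
    have h1 : Fintype.card S = Fintype.card (f '' S : Set (Fin d)) := Fintype.card_congr e
    rw [Fintype.card_compl_set, Fintype.card_compl_set, h1]
  let eC : (Sᶜ : Set (Fin d)) ≃ ((f '' S : Set (Fin d))ᶜ : Set (Fin d)) :=
    Fintype.equivOfCardEq hcard
  let π : Equiv.Perm (Fin d) :=
    (Equiv.Set.sumCompl S).symm.trans ((e.sumCongr eC).trans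
      (Equiv.Set.sumCompl (f '' S : Set (Fin d))))
  refine ⟨π, fun i hi => ?_⟩
  have h1 : (Equiv.Set.sumCompl S).symm i = Sum.inl ⟨i, hi⟩ :=
    Equiv.Set.sumCompl_symm_apply (x := ⟨i, hi⟩)
  simp only [π, Equiv.trans_apply, h1, Equiv.sumCongr_apply, Sum.map_inl,
    Equiv.Set.sumCompl_apply_inl]
  rfl

/-- If `K` is an incoherent Kraus operator (`K|i⟩ = c i |f i⟩`) and `ρ ↦ K ρ Kᴴ` commutes
with the dephasing map, then `f` is injective on the support of the coefficients `c`, and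
hence extends to a permutation `π` agreeing with `f` on the support:
`K` is strictly incoherent. -/
theorem stmt_2 {d : ℕ} (K : Matrix (Fin d) (Fin d) ℂ) (f : Fin d → Fin d) (c : Fin d → ℂ)
    (hK : ∀ i j, K j i = if j = f i then c i else 0)
    (hcomm : ∀ ρ : Matrix (Fin d) (Fin d) ℂ, K * deph ρ * Kᴴ = deph (K * ρ * Kᴴ)) :
    (∀ i i', c i ≠ 0 → c i' ≠ 0 → f i = f i' → i = i') ∧
    ∃ π : Equiv.Perm (Fin d), ∀ i, c i ≠ 0 → π i = f i := by
  classical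
  have hinj : ∀ i i', c i ≠ 0 → c i' ≠ 0 → f i = f i' → i = i' := by
    intro i i' hi hi' hf
    by_contra hne
    set ρ : Matrix (Fin d) (Fin d) ℂ := Matrix.of fun a b => if a = i ∧ b = i' then 1 else 0
    have hdeph : deph ρ = 0 := by
      ext a b
      simp only [deph, Matrix.diagonal, Matrix.of_apply, Matrix.zero_apply, ρ]
      split_ifs with h1 h2
      · exact absurd (h2.1.symm.trans h2.2) hne
      · rfl
      · rfl
    have h := congrFun (congrFun (hcomm ρ) (f i)) (f i)
    rw [hdeph] at h
    simp only [Matrix.mul_zero, Matrix.zero_mul, Matrix.zero_apply] at h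
    have hRHS : (K * ρ * Kᴴ) (f i) (f i) = c i * (starRingEnd ℂ) (c i') := by
      have hKρ : ∀ x b, (K * ρ) x b = if b = i' then K x i else 0 := by
        intro x b
        simp only [Matrix.mul_apply, ρ, Matrix.of_apply]
        rw [Finset.sum_eq_single i]
        · by_cases hb : b = i' <;> simp [hb]
        · intro a _ ha; simp [ha]
        · simp
      simp only [Matrix.mul_apply, hKρ, Matrix.conjTranspose_apply]
      rw [Finset.sum_eq_single i']
      · have h1 : K (f i) i = c i := by rw [hK]; simp
        have h2 : K (f i) i' = c i' := by rw [hK, hf]; simp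
        simp [h1, h2]
      · intro b _ hb; simp [hb]
      · simp
    rw [deph] at h
    simp only [Matrix.diagonal_apply_eq] at h
    rw [hRHS] at h
    exact hi (by
      rcases mul_eq_zero.mp h.symm with h' | h'
      · exact h'
      · exact absurd (show c i' = 0 by simpa using h') hi')
  refine ⟨hinj, ?_⟩
  obtain ⟨π, hπ⟩ := extend_perm f {i | c i ≠ 0} (fun a ha b hb hab => hinj a b ha hb hab)
  exact ⟨π, fun i hi => hπ i hi⟩
end

section
/- Let U be a unitary on ℂ^{d_S} ⊗ H_α such that for every i and every unit vector |ψ⟩ ∈ H_α, U(|i⟩ ⊗ |ψ⟩) = |f(i)⟩ ⊗ |ψ'(i,ψ)⟩ for some function f : Fin d_S → Fin d_S and unit vectors |ψ'(i,ψ)⟩. Then f is a bijection and U = ∑_i |f(i)⟩⟨i| ⊗ U_i for some unitaries U_i on H_α. -/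
open Matrix

/-- An incoherent unitary on system ⊗ ancilla (mapping each `|i⟩⊗|ψ⟩` to
`|f i⟩⊗|ψ'⟩`) has `f` a bijection and is a controlled unitary
`U = ∑ i, |f i⟩⟨i| ⊗ U_i` with each `U_i` unitary on the ancilla. -/
theorem stmt_5 {dS dα : ℕ} [NeZero dα]
    (U : Matrix (Fin dS × Fin dα) (Fin dS × Fin dα) ℂ)
    (hU : U ∈ Matrix.unitaryGroup (Fin dS × Fin dα) ℂ)
    (f : Fin dS → Fin dS)
    (h : ∀ (i : Fin dS) (ψ : Fin dα → ℂ), (∑ a, ‖ψ a‖ ^ 2 = 1) →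
      ∃ ψ' : Fin dα → ℂ, (∑ a, ‖ψ' a‖ ^ 2 = 1) ∧
        U *ᵥ (fun p => if p.1 = i then ψ p.2 else 0) =
          fun p => if p.1 = f i then ψ' p.2 else 0) :
    Function.Bijective f ∧
    ∃ Us : Fin dS → Matrix (Fin dα) (Fin dα) ℂ,
      (∀ i, Us i ∈ Matrix.unitaryGroup (Fin dα) ℂ) ∧
      ∀ j a i b, U (j, a) (i, b) = if j = f i then Us i a b else 0 := by
  have hzero : ∀ (i : Fin dS) (b : Fin dα) (j : Fin dS) (a : Fin dα),
      j ≠ f i → U (j, a) (i, b) = 0 := by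
    intro i b j a hj
    obtain ⟨ψ', hψ', heq⟩ := h i (fun c => if c = b then 1 else 0)
      (by simp [apply_ite (norm : ℂ → ℝ), Finset.sum_ite_eq'])
    have := congrFun heq (j, a)
    simp only [mulVec, dotProduct] at this
    rw [Fintype.sum_prod_type] at this
    simp only [mul_ite, mul_one, mul_zero] at this
    simp [Finset.sum_ite_eq', hj] at this
    exact this
  set Us : Fin dS → Matrix (Fin dα) (Fin dα) ℂ :=
    fun i => Matrix.of (fun a b => U (f i, a) (i, b)) with hUs
  have hstar : star U * U = 1 := hU.1
  have hcol : ∀ (i i' : Fin dS), f i = f i' → ∀ (b b' : Fin dα),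
      (star (Us i) * Us i') b b' = if i = i' ∧ b = b' then 1 else 0 := by
    intro i i' hf b b'
    have h1 : (star U * U) (i, b) (i', b') =
        if (i, b) = ((i', b') : Fin dS × Fin dα) then 1 else 0 := by
      rw [hstar, Matrix.one_apply]
    rw [Matrix.mul_apply, Fintype.sum_prod_type] at h1
    rw [Finset.sum_eq_single_of_mem (f i) (Finset.mem_univ _) (by
      intro j _ hj
      apply Finset.sum_eq_zero
      intro a _
      simp [Matrix.star_apply, hzero i b j a hj])] at h1
    rw [Matrix.mul_apply]
    simp only [Matrix.star_apply, hUs, Matrix.of_apply] at *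
    rw [← hf]
    rw [h1]
    simp [Prod.ext_iff]
  have hunit : ∀ i, Us i ∈ Matrix.unitaryGroup (Fin dα) ℂ := by
    intro i
    rw [Matrix.mem_unitaryGroup_iff']
    ext b b'
    rw [hcol i i rfl, Matrix.one_apply]
    simp
  have hinj : Function.Injective f := by
    intro i i' hf
    by_contra hne
    have hz : star (Us i) * Us i' = 0 := by
      ext b b'
      rw [hcol i i' hf]
      simp [hne]
    have hUi : Us i * star (Us i) = 1 :=
      mul_eq_one_comm.mpr (Matrix.mem_unitaryGroup_iff'.mp (hunit i))
    have h0 : Us i' = 0 := by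
      calc Us i' = (Us i * star (Us i)) * Us i' := by rw [hUi, one_mul]
      _ = Us i * (star (Us i) * Us i') := by rw [mul_assoc]
      _ = 0 := by rw [hz, mul_zero]
    have h1 : star (Us i') * Us i' = 1 := Matrix.mem_unitaryGroup_iff'.mp (hunit i')
    rw [h0, mul_zero] at h1
    have hb : 0 < dα := Nat.pos_of_ne_zero (NeZero.ne dα)
    have := congrFun (congrFun h1 ⟨0, hb⟩) ⟨0, hb⟩
    simp [Matrix.one_apply] at this
  refine ⟨Finite.injective_iff_bijective.mp hinj, Us, hunit, ?_⟩
  intro j a i b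
  by_cases hj : j = f i
  · subst hj
    simp [hUs]
  · simp [hj, hzero i b j a hj]
end

section
/- Given any finite set of strictly incoherent Kraus operators {K_μ = ∑_i c^μ_i |π_μ(i)⟩⟨i| : μ = 0,…,k−1} on ℂ^d with ∑_μ K_μ†K_μ = I, there exist unitaries U_i on ℂ^{k+1}, an orthonormal family {|φ_μ⟩} in ℂ^{k+1}, and a state |0⟩ such that ⟨φ_μ|U_i|0⟩ = c^μ_i for all μ, i. Consequently the operation ρ ↦ K_μ ρ K_μ† arises from the controlled unitary ∑_i |i⟩⟨i| ⊗ U_i, measuring |φ_μ⟩ on the ancilla, and applying V_μ = ∑_i |π_μ(i)⟩⟨i|. -/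
open Matrix

/-- Dilation of strictly incoherent operations: given SI Kraus operators
`K μ = ∑ i, c μ i |π μ i⟩⟨i|` with `∑ μ, (K μ)ᴴ K μ = 1`, there exist unitaries `U_i` on a
`(k+1)`-dimensional ancilla and an orthonormal family `{|φ μ⟩}` with
`⟨φ μ|U_i|0⟩ = c μ i`; consequently each `K μ` is reproduced from the controlled unitary
`∑ i, |i⟩⟨i| ⊗ U_i`, measurement of `|φ μ⟩`, and the permutation `V μ = ∑ i |π μ i⟩⟨i|`. -/
theorem stmt_7 {d k : ℕ} (π : Fin k → Equiv.Perm (Fin d)) (c : Fin k → Fin d → ℂ)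
    (K : Fin k → Matrix (Fin d) (Fin d) ℂ)
    (hK : ∀ μ i j, K μ j i = if j = π μ i then c μ i else 0)
    (hcomp : ∑ μ, (K μ)ᴴ * K μ = 1) :
    ∃ (Us : Fin d → Matrix (Fin (k + 1)) (Fin (k + 1)) ℂ) (φ : Fin k → Fin (k + 1) → ℂ),
      (∀ i, Us i ∈ Matrix.unitaryGroup (Fin (k + 1)) ℂ) ∧
      (∀ μ ν, ∑ a, (starRingEnd ℂ) (φ μ a) * φ ν a = if μ = ν then 1 else 0) ∧
      (∀ μ i, ∑ a, (starRingEnd ℂ) (φ μ a) * Us i a 0 = c μ i) ∧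
      (∀ μ i j, K μ j i =
        if j = π μ i then ∑ a, (starRingEnd ℂ) (φ μ a) * Us i a 0 else 0) := by
  classical
  -- column normalization from completeness
  have hnorm : ∀ i, ∑ μ, (starRingEnd ℂ) (c μ i) * c μ i = 1 := by
    intro i
    have h := congrFun (congrFun hcomp i) i
    rw [Matrix.sum_apply] at h
    have h1 : ((1 : Matrix (Fin d) (Fin d) ℂ) i i) = 1 := Matrix.one_apply_eq i
    rw [h1] at h
    rw [← h]
    apply Finset.sum_congr rfl
    intro μ _
    rw [Matrix.mul_apply]
    have : ∀ j, (K μ)ᴴ i j * K μ j i =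
        if j = π μ i then (starRingEnd ℂ) (c μ i) * c μ i else 0 := by
      intro j
      rw [Matrix.conjTranspose_apply, hK μ i j]
      split <;> simp
    rw [Finset.sum_congr rfl (fun j _ => this j)]
    simp
  -- the unit column vectors
  set v : Fin d → EuclideanSpace ℂ (Fin (k + 1)) :=
    fun i => WithLp.toLp 2 (fun a => Fin.lastCases (motive := fun _ => ℂ) 0 (fun μ => c μ i) a) with hv
  have hvnorm : ∀ i, ∑ a, (starRingEnd ℂ) (v i a) * v i a = 1 := by
    intro i
    rw [Fin.sum_univ_castSucc]
    simp [hv, hnorm i]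
  -- extend each column to an orthonormal basis
  have hbasis : ∀ i, ∃ b : OrthonormalBasis (Fin (k + 1)) ℂ
      (EuclideanSpace ℂ (Fin (k + 1))), b 0 = v i := by
    intro i
    have hcard : Module.finrank ℂ (EuclideanSpace ℂ (Fin (k + 1)))
        = Fintype.card (Fin (k + 1)) := by simp
    have horth : Orthonormal ℂ
        (({0} : Set (Fin (k + 1))).restrict (fun _ => v i)) := by
      rw [orthonormal_iff_ite]
      rintro ⟨x, hx⟩ ⟨y, hy⟩
      simp only [Set.mem_singleton_iff] at hx hy
      subst hx; subst hy
      simp only [Set.restrict_apply, if_pos rfl]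
      rw [PiLp.inner_apply]
      simpa [Complex.conj_mul', Set.restrict] using hvnorm i
    obtain ⟨b, hb⟩ := horth.exists_orthonormalBasis_extension_of_card_eq hcard
    exact ⟨b, hb 0 rfl⟩
  choose b hb using hbasis
  refine ⟨fun i => Matrix.of (fun a μ' => b i μ' a),
    fun μ a => if a = Fin.castSucc μ then 1 else 0, ?_, ?_, ?_, ?_⟩
  · intro i
    rw [Matrix.mem_unitaryGroup_iff']
    ext μ' ν'
    rw [Matrix.mul_apply]
    have := (orthonormal_iff_ite.mp (b i).orthonormal) μ' ν'
    rw [PiLp.inner_apply] at this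
    simpa [Matrix.star_apply, Matrix.one_apply, mul_comm] using this
  · intro μ ν
    by_cases h : μ = ν
    · subst h; simp
    · have : Fin.castSucc μ ≠ Fin.castSucc ν := by
        simp [Fin.castSucc_inj, h]
      simp only [if_neg h]
      rw [Finset.sum_eq_zero]
      intro a _
      by_cases ha : a = Fin.castSucc μ
      · subst ha; simp [Fin.castSucc_inj, h]
      · simp [ha]
  · intro μ i
    rw [Finset.sum_eq_single (Fin.castSucc μ)]
    · simp [hb i, hv]
    · intro a _ ha; simp [ha]
    · intro h; exact absurd (Finset.mem_univ _) h
  · intro μ i j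
    rw [hK μ i j]
    congr 1
    rw [Finset.sum_eq_single (Fin.castSucc μ)]
    · simp [hb i, hv]
    · intro a _ ha; simp [ha]
    · intro h; exact absurd (Finset.mem_univ _) h
end

section
/- The relative entropy of coherence C(ρ) := min over incoherent states σ of S(ρ‖σ) equals S(Φ(ρ)) − S(ρ), where Φ is the dephasing map and S the von Neumann entropy. Equivalently, for every incoherent state σ, S(ρ‖σ) ≥ S(Φ(ρ)) − S(ρ), with equality at σ = Φ(ρ). -/
open Matrix
open scoped ComplexOrder

/-- Matrix logarithm of a Hermitian matrix, via its spectral decomposition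
(junk value `0` on non-Hermitian input). -/
noncomputable def matLog {d : ℕ} (A : Matrix (Fin d) (Fin d) ℂ) : Matrix (Fin d) (Fin d) ℂ :=
  if h : A.IsHermitian then
    (h.eigenvectorUnitary : Matrix (Fin d) (Fin d) ℂ) *
      Matrix.diagonal (fun i => (Real.log (h.eigenvalues i) : ℂ)) *
      star (h.eigenvectorUnitary : Matrix (Fin d) (Fin d) ℂ)
  else 0

/-- Von Neumann entropy `S(ρ) = -Tr(ρ log ρ)`. -/
noncomputable def vnEntropy {d : ℕ} (ρ : Matrix (Fin d) (Fin d) ℂ) : ℝ :=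
  -((ρ * matLog ρ).trace).re

/-- Quantum relative entropy `S(ρ‖σ) = Tr(ρ log ρ) - Tr(ρ log σ)`. -/
noncomputable def relEnt {d : ℕ} (ρ σ : Matrix (Fin d) (Fin d) ℂ) : ℝ :=
  ((ρ * (matLog ρ - matLog σ)).trace).re

lemma matLog_diagonal {d : ℕ} (v : Fin d → ℝ) :
    matLog (Matrix.diagonal (fun i => (v i : ℂ)))
      = Matrix.diagonal (fun i => (Real.log (v i) : ℂ)) := by
  set A : Matrix (Fin d) (Fin d) ℂ := Matrix.diagonal (fun i => (v i : ℂ)) with hA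
  have h : A.IsHermitian := by
    rw [hA]
    refine Matrix.isHermitian_diagonal_iff.mpr fun i => ?_
    rw [_root_.IsSelfAdjoint, Complex.star_def, Complex.conj_ofReal]
  set U : Matrix (Fin d) (Fin d) ℂ := (h.eigenvectorUnitary : Matrix (Fin d) (Fin d) ℂ) with hU
  have hUU : U * star U = 1 := (Matrix.mem_unitaryGroup_iff).mp h.eigenvectorUnitary.2
  have hUU' : star U * U = 1 := (Matrix.mem_unitaryGroup_iff').mp h.eigenvectorUnitary.2
  have hspec : A = U * Matrix.diagonal (RCLike.ofReal ∘ h.eigenvalues) * star U :=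
    h.spectral_theorem
  have hAU : A * U = U * Matrix.diagonal (RCLike.ofReal ∘ h.eigenvalues) := by
    conv_lhs => rw [hspec]
    rw [mul_assoc, mul_assoc, hUU', mul_one]
  have key : ∀ i k, (v i : ℂ) * U i k = U i k * (h.eigenvalues k : ℂ) := by
    intro i k
    have := congrFun (congrFun hAU i) k
    simpa [hA, Matrix.diagonal_mul, Matrix.mul_diagonal] using this
  have key2 : U * Matrix.diagonal (fun i => (Real.log (h.eigenvalues i) : ℂ))
      = Matrix.diagonal (fun i => (Real.log (v i) : ℂ)) * U := by
    ext i k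
    simp only [Matrix.mul_diagonal, Matrix.diagonal_mul]
    rcases eq_or_ne (U i k) 0 with h0 | h0
    · simp [h0]
    · have hv : (v i : ℂ) = (h.eigenvalues k : ℂ) := by
        have hk := key i k
        rw [mul_comm (U i k) _] at hk
        exact mul_right_cancel₀ h0 hk
      have : v i = h.eigenvalues k := by exact_mod_cast hv
      rw [this]; ring
  rw [matLog, dif_pos h, ← hU, mul_assoc, ← mul_assoc U, key2, mul_assoc, hUU, mul_one]

lemma trace_mul_diag_re {d : ℕ} (ρ : Matrix (Fin d) (Fin d) ℂ) (w : Fin d → ℝ) :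
    ((ρ * Matrix.diagonal (fun i => (w i : ℂ))).trace).re
      = ∑ i, (ρ i i).re * w i := by
  rw [Matrix.trace]
  rw [Complex.re_sum]
  refine Finset.sum_congr rfl fun i _ => ?_
  simp [Matrix.diag, Matrix.mul_diagonal, Complex.mul_re]

lemma gibbs {d : ℕ} (p q : Fin d → ℝ) (hp : ∀ i, 0 ≤ p i) (hq : ∀ i, 0 ≤ q i)
    (hps : ∑ i, p i = 1) (hqs : ∑ i, q i = 1) (hsupp : ∀ i, q i = 0 → p i = 0) :
    ∑ i, p i * Real.log (q i) ≤ ∑ i, p i * Real.log (p i) := by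
  have key : ∀ i, p i * Real.log (q i) - p i * Real.log (p i) ≤ q i - p i := by
    intro i
    rcases eq_or_lt_of_le (hp i) with h0 | h0
    · simp [← h0, hq i]
    · have hqi : 0 < q i := by
        rcases eq_or_lt_of_le (hq i) with h1 | h1
        · exact absurd (hsupp i h1.symm) (ne_of_gt h0)
        · exact h1
      calc p i * Real.log (q i) - p i * Real.log (p i)
          = p i * Real.log (q i / p i) := by
            rw [Real.log_div (ne_of_gt hqi) (ne_of_gt h0)]; ring
        _ ≤ p i * (q i / p i - 1) :=
            mul_le_mul_of_nonneg_left (Real.log_le_sub_one_of_pos (div_pos hqi h0)) h0.le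
        _ = q i - p i := by field_simp
  have h1 : ∑ i, (p i * Real.log (q i) - p i * Real.log (p i)) ≤ ∑ i, (q i - p i) :=
    Finset.sum_le_sum fun i _ => key i
  rw [Finset.sum_sub_distrib, Finset.sum_sub_distrib, hps, hqs] at h1
  linarith


/-- The relative entropy of coherence equals `S(Φ(ρ)) - S(ρ)`: for every incoherent state `σ`
(whose support contains that of `ρ`), `S(ρ‖σ) ≥ S(Φ(ρ)) - S(ρ)`, with equality at
`σ = Φ(ρ)`. -/
theorem stmt_9 {d : ℕ} (ρ : Matrix (Fin d) (Fin d) ℂ)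
    (hρ : ρ.PosSemidef) (htr : ρ.trace = 1) :
    (∀ σ : Matrix (Fin d) (Fin d) ℂ, σ.PosSemidef → σ.trace = 1 →
      (∀ i j, i ≠ j → σ i j = 0) →
      (∀ i, σ i i = 0 → ρ i i = 0) →
      vnEntropy (deph ρ) - vnEntropy ρ ≤ relEnt ρ σ) ∧
    relEnt ρ (deph ρ) = vnEntropy (deph ρ) - vnEntropy ρ := by
  set p : Fin d → ℝ := fun i => (ρ i i).re with hpdef
  have hρreal : ∀ i, ((p i : ℝ) : ℂ) = ρ i i := fun i =>
    hρ.isHermitian.coe_re_apply_self i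
  have hdiag_nonneg : ∀ (M : Matrix (Fin d) (Fin d) ℂ), M.PosSemidef →
      ∀ i, 0 ≤ (M i i).re := by
    intro M hM i
    have := hM.re_dotProduct_nonneg (Pi.single i 1)
    simpa [dotProduct, Matrix.mulVec, Pi.single_apply, Finset.mul_sum,
      RCLike.re_to_complex] using this
  have hpnn : ∀ i, 0 ≤ p i := hdiag_nonneg ρ hρ
  have htr_re : ∀ (M : Matrix (Fin d) (Fin d) ℂ), M.trace = 1 → ∑ i, (M i i).re = 1 := by
    intro M hM
    have := congrArg Complex.re hM
    rw [Matrix.trace] at this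
    rw [← Complex.re_sum]
    simpa [Matrix.diag] using this
  have hpsum : ∑ i, p i = 1 := htr_re ρ htr
  have hdeph : deph ρ = Matrix.diagonal (fun i => ((p i : ℝ) : ℂ)) := by
    have hfun : (fun i => ρ i i) = fun i => ((p i : ℝ) : ℂ) :=
      funext fun i => (hρreal i).symm
    rw [deph, hfun]
  have hlogdeph : matLog (deph ρ) = Matrix.diagonal (fun i => (Real.log (p i) : ℂ)) := by
    rw [hdeph, matLog_diagonal]
  have hvndeph : vnEntropy (deph ρ) = -∑ i, p i * Real.log (p i) := by
    rw [vnEntropy, hlogdeph, trace_mul_diag_re]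
    congr 1
    refine Finset.sum_congr rfl fun i _ => ?_
    simp [deph, Matrix.diagonal_apply_eq]
    exact Or.inl rfl
  set T : ℝ := ((ρ * matLog ρ).trace).re with hT
  have hvnρ : vnEntropy ρ = -T := rfl
  have hrel : ∀ M : Matrix (Fin d) (Fin d) ℂ,
      relEnt ρ M = T - ((ρ * matLog M).trace).re := by
    intro M
    rw [relEnt, mul_sub, Matrix.trace_sub, Complex.sub_re, hT]
  constructor
  · intro σ hσ hσtr hoff hsupp
    set q : Fin d → ℝ := fun i => (σ i i).re with hqdef
    have hσreal : ∀ i, ((q i : ℝ) : ℂ) = σ i i := fun i =>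
      hσ.isHermitian.coe_re_apply_self i
    have hσdiag : σ = Matrix.diagonal (fun i => ((q i : ℝ) : ℂ)) := by
      ext i j
      rcases eq_or_ne i j with rfl | hij
      · rw [Matrix.diagonal_apply_eq, hσreal]
      · rw [Matrix.diagonal_apply_ne _ hij, hoff i j hij]
    have hlogσ : matLog σ = Matrix.diagonal (fun i => (Real.log (q i) : ℂ)) := by
      rw [hσdiag, matLog_diagonal]
    have hcross : ((ρ * matLog σ).trace).re = ∑ i, p i * Real.log (q i) := by
      rw [hlogσ, trace_mul_diag_re]
    have hqnn : ∀ i, 0 ≤ q i := hdiag_nonneg σ hσ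
    have hqsum : ∑ i, q i = 1 := htr_re σ hσtr
    have hsupp' : ∀ i, q i = 0 → p i = 0 := by
      intro i hqi
      have hσi : σ i i = 0 := by rw [← hσreal i, hqi, Complex.ofReal_zero]
      have := hsupp i hσi
      rw [hpdef]
      simp [this]
    have hg := gibbs p q hpnn hqnn hpsum hqsum hsupp'
    rw [hrel σ, hcross, hvndeph, hvnρ]
    linarith
  · have hcross : ((ρ * matLog (deph ρ)).trace).re = ∑ i, p i * Real.log (p i) := by
      rw [hlogdeph, trace_mul_diag_re]
    rw [hrel (deph ρ), hcross, hvndeph, hvnρ]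
    ring
end
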